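/- Let x be a ϖ_{n-r}-permissible alcove, with associated data: J^{(i)} = (j^{(i)}_1,...,j^{(i)}_r) tracking the positions of zeros of x^{(i)} - ϖ_{i-1} via the inductive rule j^{(i+1)}_q = i if j^{(i)}_q = P(x)(i), else j^{(i)}_q; change points 1 = c(q,1) < c(q,2) < ... < c(q,f_q) < n+2 of the sequence (j^{(i)}_q)_{i=1}^{n+1}; and values a(q,f) = j_q^{(c(q,f))}. Then for 2 ≤ f ≤ f_q we have a(q,f) = c(q,f) - 1, and moreover a(q,1) > a(q,2) and a(q,2) < a(q,3) < ... < a(q,f_q). -/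
import Mathlib


open Finset

/-- Standard basis vector `e_j` in `ℤⁿ`. -/
def ev (n : ℕ) (j : Fin n) : Fin n → ℤ := fun k => if k = j then 1 else 0

/-- The coweight `ϖ_t = e_1 + ⋯ + e_t` (t ones followed by zeros). -/
def varpi (n t : ℕ) : Fin n → ℤ := fun j => if (j : ℕ) < t then 1 else 0

/-- Dominance order `μ ⪯ λ`: equal total sums, partial sums of `μ` bounded by those of `λ`. -/
def DomLE {n : ℕ} (μ lam : Fin n → ℤ) : Prop :=
  (∑ i, μ i = ∑ i, lam i) ∧
  ∀ k : Fin n, ∑ i ∈ Finset.Iic k, μ i ≤ ∑ i ∈ Finset.Iic k, lam i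

/-- A coweight is dominant iff its coordinates are weakly decreasing. -/
def IsDominant {n : ℕ} (v : Fin n → ℤ) : Prop := ∀ i j : Fin n, i ≤ j → v j ≤ v i

/-- The weakly decreasing rearrangement `dom(v)` of `v`. -/
noncomputable def domOf {n : ℕ} (v : Fin n → ℤ) : Fin n → ℤ :=
  v ∘ Tuple.sort (fun i => -v i)

/-- `succA x i` is `x^{(i+1)}`, with the convention `x^{(n+1)} = x^{(1)} + (1,…,1)`. -/
def succA {n : ℕ} (x : Fin n → Fin n → ℤ) (i : Fin n) : Fin n → ℤ :=
  if h : (i : ℕ) + 1 < n then x ⟨(i : ℕ) + 1, h⟩ else fun j => x ⟨0, i.pos⟩ j + 1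

/-- A tuple `(x^{(1)},…,x^{(n)})` is an alcove. -/
def IsAlcove {n : ℕ} (x : Fin n → Fin n → ℤ) : Prop :=
  (∀ i : Fin n, ∀ j, x i j ≤ succA x i j) ∧
  (∀ i : Fin n, (i : ℕ) + 1 < n → ∑ j, succA x i j = (∑ j, x i j) + 1)

/-- `P` is the permutation `P(x)` of the alcove `x`: `x^{(i+1)} = x^{(i)} + e_{P(x)(i)}`. -/
def IsPermOf {n : ℕ} (x : Fin n → Fin n → ℤ) (P : Equiv.Perm (Fin n)) : Prop :=
  ∀ i : Fin n, ∀ j, succA x i j = x i j + ev n (P i) j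

/-- A permutation acts on `ℤⁿ` by permuting coordinates: `(σv)_{σ(i)} = v_i`. -/
def permAct {n : ℕ} (σ : Equiv.Perm (Fin n)) (v : Fin n → ℤ) : Fin n → ℤ :=
  fun j => v (σ.symm j)

/-- The `n`-cycle `c = (1 2 ⋯ n)`. -/
def cyc (n : ℕ) [NeZero n] : Equiv.Perm (Fin n) := Equiv.addRight 1

/-- Rotation of alcoves. -/
def rotA {n : ℕ} [NeZero n] (x : Fin n → Fin n → ℤ) : Fin n → Fin n → ℤ := fun i =>
  if h : (i : ℕ) + 1 < n then
    permAct (cyc n)⁻¹ (fun j => x ⟨(i : ℕ) + 1, h⟩ j - varpi n 1 j)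
  else
    fun j => permAct (cyc n)⁻¹ (x 0) j + varpi n (n - 1) j

/-- An alcove is `λ`-permissible if `dom(x^{(i)} - ϖ_{i-1}) ⪯ λ` for all `i`. -/
noncomputable def Permissible {n : ℕ} (lam : Fin n → ℤ) (x : Fin n → Fin n → ℤ) : Prop :=
  ∀ i : Fin n, DomLE (domOf (fun j => x i j - varpi n (i : ℕ) j)) lam

/-- The Kottwitz–Rapoport relation `i ⊴_x j` (six-case rule). -/
def TriLE {n : ℕ} (x : Fin n → Fin n → ℤ) (P : Equiv.Perm (Fin n)) (i j : Fin n) : Prop :=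
  (x ⟨0, i.pos⟩ j < x ⟨0, i.pos⟩ i) ∨
  (x ⟨0, i.pos⟩ i = x ⟨0, i.pos⟩ j ∧
    ((P.symm i < i ∧ P.symm j < j ∧ j ≤ i) ∨
     (P.symm i < i ∧ j ≤ P.symm j) ∨
     (P.symm i = i ∧ P.symm j = j ∧ i = j) ∨
     (P.symm i = i ∧ j < P.symm j) ∨
     (i < P.symm i ∧ j < P.symm j ∧ j ≤ i)))
lemma varpi_sum (n t : ℕ) (ht : t ≤ n) : ∑ j : Fin n, varpi n t j = (t : ℤ) := by
  unfold varpi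
  rw [Fin.sum_univ_eq_sum_range (fun i => if i < t then (1:ℤ) else 0), Finset.sum_boole]
  have : (Finset.range n).filter (fun i => i < t) = Finset.range t := by
    ext i; simp; omega
  rw [this, Finset.card_range]

lemma varpi_partial_le (n t : ℕ) (ht : t ≤ n) (k : Fin n) :
    ∑ j ∈ Finset.Iic k, varpi n t j ≤ (t : ℤ) := by
  calc ∑ j ∈ Finset.Iic k, varpi n t j ≤ ∑ j : Fin n, varpi n t j := by
        apply Finset.sum_le_sum_of_subset_of_nonneg (Finset.subset_univ _)
        intro j _ _; unfold varpi; positivity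
    _ = (t : ℤ) := varpi_sum n t ht

lemma domle_nonneg {n : ℕ} (hn : 2 ≤ n) {t : ℕ} (ht : t ≤ n - 1) {v : Fin n → ℤ}
    (h : DomLE (domOf v) (varpi n t)) : ∀ j, 0 ≤ v j := by
  set σ := Tuple.sort (fun i => -v i) with hσ
  have hanti : Antitone (v ∘ σ) := by
    intro a b hab
    have := Tuple.monotone_sort (fun i => -v i) hab
    simpa using this
  have hsum : ∑ i, (v ∘ σ) i = ∑ i, v i := Equiv.sum_comp σ v
  have htot : ∑ i, v i = (t : ℤ) := by
    rw [← hsum]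
    have := h.1
    simpa [domOf, varpi_sum n t (by omega)] using this
  have hlastpos : n - 1 < n := by omega
  set lst : Fin n := ⟨n - 1, hlastpos⟩ with hlst
  set k : Fin n := ⟨n - 2, by omega⟩ with hk
  have hIic : Finset.Iic k = Finset.univ.erase lst := by
    ext i
    simp [Finset.mem_Iic, Fin.le_def, Fin.ext_iff, hk, hlst]
    omega
  have hpsum : ∑ i ∈ Finset.Iic k, (v ∘ σ) i ≤ (t : ℤ) :=
    le_trans (h.2 k) (varpi_partial_le n t (by omega) k)
  have herase : ∑ i ∈ Finset.univ.erase lst, (v ∘ σ) i = (∑ i, v i) - (v ∘ σ) lst := by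
    rw [← hsum]
    rw [Finset.sum_erase_eq_sub (Finset.mem_univ lst)]
  have hlast0 : 0 ≤ (v ∘ σ) lst := by
    rw [hIic, herase, htot] at hpsum; omega
  intro j
  have : v j = (v ∘ σ) (σ.symm j) := by simp
  rw [this]
  refine le_trans hlast0 (hanti ?_)
  have := (σ.symm j).isLt
  simp only [hlst, Fin.le_def]
  omega

lemma alcove_chain {n : ℕ} [NeZero n] {x : Fin n → Fin n → ℤ} (hx : IsAlcove x)
    (m : Fin n) (j : Fin n) : x m j ≤ x 0 j + 1 := by
  obtain ⟨hle, -⟩ := hx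
  have key : ∀ d (k : ℕ) (hk : k < n), n - 1 - k ≤ d → x ⟨k, hk⟩ j ≤ x 0 j + 1 := by
    intro d
    induction d with
    | zero =>
      intro k hk hd
      have hk' : k = n - 1 := by omega
      subst hk'
      have h1 := hle ⟨n - 1, hk⟩ j
      have hz : (⟨0, Fin.pos (⟨n - 1, hk⟩ : Fin n)⟩ : Fin n) = 0 := Fin.ext (by simp)
      have h2 : succA x ⟨n - 1, hk⟩ j = x 0 j + 1 := by
        simp only [succA,
          dif_neg (show ¬((⟨n - 1, hk⟩ : Fin n) : ℕ) + 1 < n by simp; omega), hz]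
      rw [h2] at h1; exact h1
    | succ d ih =>
      intro k hk hd
      by_cases hkn : k + 1 < n
      · have h1 := hle ⟨k, hk⟩ j
        have h2 : succA x ⟨k, hk⟩ j = x ⟨k + 1, hkn⟩ j := by
          unfold succA; rw [dif_pos (by simpa using hkn)]
        rw [h2] at h1
        exact h1.trans (ih (k + 1) hkn (by omega))
      · have hk' : k = n - 1 := by omega
        subst hk'
        have h1 := hle ⟨n - 1, hk⟩ j
        have hz : (⟨0, Fin.pos (⟨n - 1, hk⟩ : Fin n)⟩ : Fin n) = 0 := Fin.ext (by simp)
        have h2 : succA x ⟨n - 1, hk⟩ j = x 0 j + 1 := by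
          simp only [succA,
            dif_neg (show ¬((⟨n - 1, hk⟩ : Fin n) : ℕ) + 1 < n by simp; omega), hz]
        rw [h2] at h1; exact h1
  have := key n m.val m.isLt (by omega)
  simpa using this
set_option maxHeartbeats 1000000 in
theorem aq_basic (n r : ℕ) [NeZero n] (hr1 : 1 ≤ r) (hrn : r ≤ n - 1)
    (x : Fin n → Fin n → ℤ) (hx : IsAlcove x)
    (hxperm : Permissible (varpi n (n - r)) x)
    (P : Equiv.Perm (Fin n)) (hP : IsPermOf x P)
    (J : Fin (n + 1) → Fin r → Fin n)
    (hJinj : Function.Injective (J 0))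
    (hJ0 : ∀ j : Fin n, x 0 j = 0 ↔ ∃ q, J 0 q = j)
    (hJrec : ∀ i : Fin n, ∀ q,
      J i.succ q = if J i.castSucc q = P i then i else J i.castSucc q)
    (q : Fin r)
    (jq : ℕ → Fin n)
    (hjq : ∀ p : ℕ, ∀ h : p - 1 < n + 1, 1 ≤ p → jq p = J ⟨p - 1, h⟩ q)
    (fq : ℕ)
    (hfq : fq = 1 + (Finset.univ.filter
      (fun i : Fin n => J i.succ q ≠ J i.castSucc q)).card)
    (cfun : ℕ → ℕ) (afun : ℕ → Fin n)
    (hc1 : cfun 1 = 1)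
    (hcmono : ∀ f, 1 ≤ f → f ≤ fq → cfun f < cfun (f + 1))
    (hctop : cfun (fq + 1) = n + 2)
    (hconst : ∀ f, 1 ≤ f → f ≤ fq → ∀ p, cfun f ≤ p → p < cfun (f + 1) → p ≤ n + 1 →
      jq p = afun f)
    (hchange : ∀ f, 1 ≤ f → f < fq → jq (cfun (f + 1)) ≠ jq (cfun (f + 1) - 1)) :
    (∀ f, 2 ≤ f → f ≤ fq → (afun f : ℕ) = cfun f - 2) ∧
    (2 ≤ fq → (afun 2 : ℕ) < (afun 1 : ℕ)) ∧
    (∀ f, 2 ≤ f → f < fq → (afun f : ℕ) < (afun (f + 1) : ℕ)) := by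
  have hn2 : 2 ≤ n := by omega
  -- lower bound on cfun
  have hclow : ∀ f, 1 ≤ f → f ≤ fq + 1 → f ≤ cfun f := by
    intro f hf
    induction f, hf using Nat.le_induction with
    | base => intro _; omega
    | succ g hg ih =>
      intro hle
      have h1 := ih (by omega)
      have h2 := hcmono g hg (by omega)
      omega
  -- upper bound on cfun
  have hckey : ∀ d f, 1 ≤ f → f + d = fq + 1 → cfun f + d ≤ n + 2 := by
    intro d
    induction d with
    | zero => intro f hf h; have : f = fq + 1 := by omega
              rw [this, hctop]
    | succ d ih =>
      intro f hf h
      have h1 := hcmono f hf (by omega)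
      have h2 := ih (f + 1) (by omega) (by omega)
      omega
  have hcup : ∀ f, 1 ≤ f → f ≤ fq → cfun f ≤ n + 1 := by
    intro f hf hle
    have := hckey (fq + 1 - f) f hf (by omega)
    omega
  -- the generic "change step" analysis
  have hstep : ∀ p, 2 ≤ p → p ≤ n + 1 →
      ∀ (h1 : p - 1 < n + 1) (h2 : p - 2 < n + 1) (h3 : p - 2 < n),
      J ⟨p - 1, h1⟩ q ≠ J ⟨p - 2, h2⟩ q →
      J ⟨p - 1, h1⟩ q = ⟨p - 2, h3⟩ ∧ P ⟨p - 2, h3⟩ = J ⟨p - 2, h2⟩ q := by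
    intro p hp2 hpn h1 h2 h3 hne
    set i : Fin n := ⟨p - 2, h3⟩ with hi
    have hisucc : i.succ = ⟨p - 1, h1⟩ := Fin.ext (by simp [hi] <;> omega)
    have hicast : i.castSucc = ⟨p - 2, h2⟩ := Fin.ext (by simp [hi])
    have hrec := hJrec i q
    rw [hisucc, hicast] at hrec
    by_cases hcond : J ⟨p - 2, h2⟩ q = P i
    · rw [if_pos hcond] at hrec
      exact ⟨hrec, hcond.symm⟩
    · rw [if_neg hcond] at hrec
      exact absurd hrec hne
  -- Part 1
  have part1 : ∀ f, 2 ≤ f → f ≤ fq → (afun f : ℕ) = cfun f - 2 := by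
    intro f hf2 hffq
    have hp2 : 2 ≤ cfun f := le_trans hf2 (hclow f (by omega) (by omega))
    have hpn : cfun f ≤ n + 1 := hcup f (by omega) hffq
    have hch := hchange (f - 1) (by omega) (by omega)
    rw [show f - 1 + 1 = f by omega] at hch
    have hj1 : jq (cfun f) = J ⟨cfun f - 1, by omega⟩ q := hjq (cfun f) (by omega) (by omega)
    have hj2 : jq (cfun f - 1) = J ⟨cfun f - 2, by omega⟩ q :=
      hjq (cfun f - 1) (by omega) (by omega)
    obtain ⟨hval, -⟩ := hstep (cfun f) hp2 hpn (by omega) (by omega) (by omega)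
      (by rw [← hj1, ← hj2]; exact hch)
    have ha : afun f = jq (cfun f) :=
      (hconst f (by omega) hffq (cfun f) le_rfl (hcmono f (by omega) hffq) hpn).symm
    rw [ha, hj1, hval]
  refine ⟨part1, ?_, ?_⟩
  · -- Part 2
    intro hfq2
    set j₀ : Fin n := J 0 q with hj₀
    have hp2 : 2 ≤ cfun 2 := le_trans le_rfl (hclow 2 (by omega) (by omega))
    have hpn : cfun 2 ≤ n + 1 := hcup 2 (by omega) hfq2
    have ha1 : afun 1 = j₀ := by
      have h1 : jq 1 = afun 1 := by
        apply hconst 1 le_rfl (by omega) 1 (by omega) ?_ (by omega)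
        have := hcmono 1 le_rfl (by omega)
        omega
      have h2 : jq 1 = J 0 q := hjq 1 (by omega) le_rfl
      rw [← h1, h2, hj₀]
    -- constancy in the first block
    have hblock : ∀ m : ℕ, m ≤ cfun 2 - 2 → ∀ hm : m < n + 1, J ⟨m, hm⟩ q = j₀ := by
      intro m hmle hm
      have h1 : jq (m + 1) = afun 1 := by
        apply hconst 1 le_rfl (by omega) (m + 1) (by omega) (by show m + 1 < cfun 2; omega) (by omega)
      have h2 : jq (m + 1) = J ⟨m, hm⟩ q := hjq (m + 1) (by omega) (by omega)
      rw [← h2, h1, ha1]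
    -- nonnegativity from permissibility
    have hnn : ∀ (i : Fin n) (j : Fin n), 0 ≤ x i j - varpi n (i : ℕ) j := by
      intro i j
      simpa using domle_nonneg hn2 (show n - r ≤ n - 1 by omega) (hxperm i) j
    have hx0 : x 0 j₀ = 0 := (hJ0 j₀).2 ⟨q, rfl⟩
    -- the invariant: coordinate j₀ stays a zero through the first block
    have hinv : ∀ m : ℕ, ∀ hm : m < n, m ≤ cfun 2 - 2 → x ⟨m, hm⟩ j₀ = varpi n m j₀ := by
      intro m
      induction m with
      | zero =>
        intro hm _
        have h0 : (⟨0, hm⟩ : Fin n) = 0 := Fin.ext (by simp)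
        rw [h0, hx0]
        simp [varpi]
      | succ m ih =>
        intro hm hmle
        have hmn : m < n := by omega
        have hprev := ih hmn (by omega)
        set i : Fin n := ⟨m, hmn⟩ with hi
        have hsA : succA x i = x ⟨m + 1, hm⟩ := by
          unfold succA
          rw [dif_pos (show (i : ℕ) + 1 < n from hm)]
        have hx1 : x ⟨m + 1, hm⟩ j₀ = x i j₀ + ev n (P i) j₀ := by
          rw [← hsA]; exact hP i j₀
        have hJm1 : J ⟨m + 1, by omega⟩ q = j₀ := hblock (m + 1) hmle (by omega)
        have hJm : J ⟨m, by omega⟩ q = j₀ := hblock m (by omega) (by omega)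
        have hrec := hJrec i q
        have hisucc : i.succ = ⟨m + 1, by omega⟩ := Fin.ext (by simp [hi])
        have hicast : i.castSucc = ⟨m, by omega⟩ := Fin.ext (by simp [hi])
        have hJs : J i.succ q = j₀ := by rw [hisucc]; exact hJm1
        have hJc : J i.castSucc q = j₀ := by rw [hicast]; exact hJm
        rw [hJs, hJc] at hrec
        by_cases hPi : P i = j₀
        · rw [if_pos hPi.symm] at hrec
          have hval : (j₀ : ℕ) = m := by rw [hrec]
          have hev : ev n (P i) j₀ = 1 := by
            unfold ev; rw [if_pos hPi.symm]
          rw [hx1, hprev, hev]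
          unfold varpi
          rw [if_neg (by omega), if_pos (by omega)]
          norm_num
        · have hev : ev n (P i) j₀ = 0 := by
            unfold ev; rw [if_neg (fun h => hPi h.symm)]
          rw [hx1, hprev, hev, add_zero]
          by_cases hj0m : (j₀ : ℕ) = m
          · exfalso
            have hnn1 := hnn ⟨m + 1, hm⟩ j₀
            have e1 : x ⟨m + 1, hm⟩ j₀ = 0 := by
              rw [hx1, hprev, hev, add_zero]
              unfold varpi
              rw [if_neg (by omega)]
            have e2 : varpi n (m + 1) j₀ = 1 := by
              unfold varpi; rw [if_pos (by omega)]
            rw [show ((⟨m + 1, hm⟩ : Fin n) : ℕ) = m + 1 from rfl, e1, e2] at hnn1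
            omega
          · unfold varpi
            by_cases h : (j₀ : ℕ) < m
            · rw [if_pos h, if_pos (by omega)]
            · rw [if_neg h, if_neg (by omega)]
    -- the change at cfun 2
    have hch := hchange 1 le_rfl (by omega)
    rw [show (1 : ℕ) + 1 = 2 from rfl] at hch
    have hj1 : jq (cfun 2) = J ⟨cfun 2 - 1, by omega⟩ q := hjq (cfun 2) (by omega) (by omega)
    have hj2 : jq (cfun 2 - 1) = J ⟨cfun 2 - 2, by omega⟩ q :=
      hjq (cfun 2 - 1) (by omega) (by omega)
    obtain ⟨hval, hPi⟩ := hstep (cfun 2) hp2 hpn (by omega) (by omega) (by omega)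
      (by rw [← hj1, ← hj2]; exact hch)
    have hJprev : J ⟨cfun 2 - 2, by omega⟩ q = j₀ := hblock (cfun 2 - 2) le_rfl (by omega)
    rw [hJprev] at hPi
    -- afun 2
    have ha2 : (afun 2 : ℕ) = cfun 2 - 2 := part1 2 le_rfl hfq2
    -- upper bound on the successor value
    have hlt2 : cfun 2 - 2 < n := by omega
    have hiv : x ⟨cfun 2 - 2, hlt2⟩ j₀ = varpi n (cfun 2 - 2) j₀ :=
      hinv (cfun 2 - 2) hlt2 le_rfl
    have hev : ev n (P ⟨cfun 2 - 2, hlt2⟩) j₀ = 1 := by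
      unfold ev
      rw [if_pos (show j₀ = P ⟨cfun 2 - 2, hlt2⟩ from hPi.symm)]
    have hXeq : succA x ⟨cfun 2 - 2, hlt2⟩ j₀ = varpi n (cfun 2 - 2) j₀ + 1 := by
      rw [hP ⟨cfun 2 - 2, hlt2⟩ j₀, hiv, hev]
    have hXle : succA x ⟨cfun 2 - 2, hlt2⟩ j₀ ≤ x 0 j₀ + 1 := by
      by_cases h : ((⟨cfun 2 - 2, hlt2⟩ : Fin n) : ℕ) + 1 < n
      · have he : succA x ⟨cfun 2 - 2, hlt2⟩ = x ⟨cfun 2 - 2 + 1, h⟩ := by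
          unfold succA
          rw [dif_pos h]
        rw [he]
        exact alcove_chain hx _ j₀
      · have hz : (⟨0, Fin.pos (⟨cfun 2 - 2, hlt2⟩ : Fin n)⟩ : Fin n) = 0 := Fin.ext (by simp)
        have he : succA x ⟨cfun 2 - 2, hlt2⟩ j₀ = x 0 j₀ + 1 := by
          simp only [succA, dif_neg h, hz]
        rw [he]
    rw [hXeq, hx0] at hXle
    have hvp0 : ¬ ((j₀ : ℕ) < cfun 2 - 2) := by
      intro hlt
      rw [show varpi n (cfun 2 - 2) j₀ = 1 from by unfold varpi; rw [if_pos hlt]] at hXle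
      omega
    have hne2 : (j₀ : ℕ) ≠ cfun 2 - 2 := by
      intro heq
      apply hch
      have e1 : jq (cfun 2) = (⟨cfun 2 - 2, hlt2⟩ : Fin n) := hj1.trans hval
      have e2 : jq (cfun 2 - 1) = j₀ := hj2.trans hJprev
      exact e1.trans ((Fin.ext (show ((⟨cfun 2 - 2, hlt2⟩ : Fin n) : ℕ) = (j₀ : ℕ) by
        simp [heq])).trans e2.symm)
    rw [ha2, ha1]
    omega
  · -- Part 3
    intro f hf2 hffq
    have a := part1 f hf2 (le_of_lt hffq)
    have b := part1 (f + 1) (by omega) hffq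
    have c := hcmono f (by omega) (le_of_lt hffq)
    have d := hclow f (by omega) (by omega)
    omega
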